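/- If the value set V contains two distinct values a ≠ b, then the queue specification T_queue is not anagram-agnostic: the sequences τ1 = enq(a)·enq(b) and τ2 = enq(b)·enq(a) are anagrams, both belong to T_queue, yet τ1·deq(a) ∈ T_queue while τ2·deq(a) ∉ T_queue, so τ1 ≁ τ2. -/
import Mathlib


/-- τ1 ∼ τ2 : the two sequences admit exactly the same legal continuations. -/
def SpecEquiv {A : Type} (T : Set (List A)) (τ1 τ2 : List A) : Prop :=
  ∀ τ' : List A, τ1 ++ τ' ∈ T ↔ τ2 ++ τ' ∈ T

/-- A specification is anagram-agnostic if any two of its members that are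
permutations of one another (anagrams) are equivalent. -/
def AnagramAgnostic {A : Type} (T : Set (List A)) : Prop :=
  ∀ τ1 ∈ T, ∀ τ2 ∈ T, τ1.Perm τ2 → SpecEquiv T τ1 τ2

/-- Queue symbols: `enq v`, `peek v` (`v ∈ V`), `deq (some v)` (`v ∈ V`) and
the empty dequeue `deq none` (i.e. `deq(ε)`). -/
inductive QueueOp (V : Type) : Type
  | enq (v : V) : QueueOp V
  | deq (v : Option V) : QueueOp V
  | peek (v : V) : QueueOp V
deriving DecidableEq

/-- Execution of queue sequences: `QueueExec q w q'` holds when `w` can be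
legally executed from the FIFO queue `q` (front at the head), ending in `q'`.
`enq v` appends `v` at the back; `deq (some v)` (resp. `peek v`) is enabled
only when the front is `v` and removes it (resp. leaves the queue unchanged);
`deq none` is enabled only when the queue is empty. -/
inductive QueueExec {V : Type} : List V → List (QueueOp V) → List V → Prop
  | nil (q : List V) : QueueExec q [] q
  | enq {q q' : List V} {w : List (QueueOp V)} (v : V) :
      QueueExec (q ++ [v]) w q' → QueueExec q (QueueOp.enq v :: w) q'
  | deq {q q' : List V} {w : List (QueueOp V)} (v : V) :
      QueueExec q w q' → QueueExec (v :: q) (QueueOp.deq (some v) :: w) q'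
  | peek {q q' : List V} {w : List (QueueOp V)} (v : V) :
      QueueExec (v :: q) w q' → QueueExec (v :: q) (QueueOp.peek v :: w) q'
  | deqEmpty {q' : List V} {w : List (QueueOp V)} :
      QueueExec [] w q' → QueueExec [] (QueueOp.deq none :: w) q'

/-- The queue specification: sequences executable from the empty queue. -/
def TQueue (V : Type) : Set (List (QueueOp V)) :=
  {w | ∃ q : List V, QueueExec [] w q}

theorem stmt11 {V : Type} (a b : V) (hab : a ≠ b) :
    [QueueOp.enq a, QueueOp.enq b].Perm [QueueOp.enq b, QueueOp.enq a] ∧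
    [QueueOp.enq a, QueueOp.enq b] ∈ TQueue V ∧
    [QueueOp.enq b, QueueOp.enq a] ∈ TQueue V ∧
    [QueueOp.enq a, QueueOp.enq b] ++ [QueueOp.deq (some a)] ∈ TQueue V ∧
    [QueueOp.enq b, QueueOp.enq a] ++ [QueueOp.deq (some a)] ∉ TQueue V ∧
    ¬ SpecEquiv (TQueue V) [QueueOp.enq a, QueueOp.enq b]
        [QueueOp.enq b, QueueOp.enq a] ∧
    ¬ AnagramAgnostic (TQueue V) := by
  have hperm : [QueueOp.enq a, QueueOp.enq b].Perm [QueueOp.enq b, QueueOp.enq a] :=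
    List.Perm.swap _ _ _
  have h1 : [QueueOp.enq a, QueueOp.enq b] ∈ TQueue V :=
    ⟨[a, b], .enq a (.enq b (.nil _))⟩
  have h2 : [QueueOp.enq b, QueueOp.enq a] ∈ TQueue V :=
    ⟨[b, a], .enq b (.enq a (.nil _))⟩
  have h3 : [QueueOp.enq a, QueueOp.enq b] ++ [QueueOp.deq (some a)] ∈ TQueue V :=
    ⟨[b], .enq a (.enq b (.deq a (.nil _)))⟩
  have h4 : [QueueOp.enq b, QueueOp.enq a] ++ [QueueOp.deq (some a)] ∉ TQueue V := by
    rintro ⟨q, h⟩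
    cases h with
    | enq _ h => cases h with
      | enq _ h => cases h with
        | deq _ _ => exact hab rfl
  have h5 : ¬ SpecEquiv (TQueue V) [QueueOp.enq a, QueueOp.enq b]
      [QueueOp.enq b, QueueOp.enq a] := fun h =>
    h4 ((h [QueueOp.deq (some a)]).mp h3)
  exact ⟨hperm, h1, h2, h3, h4, h5, fun h => h5 (h _ h1 _ h2 hperm)⟩
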